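/- Let N ≥ 2, let τ_1, …, τ_N be the N roots of the Lobatto polynomial L_N, and let w_k = 2/(N(N−1)·P_{N−1}(τ_k)²) be the Gauss–Lobatto quadrature weights. If q is a real polynomial of degree at most N − 1 satisfying Σ_{i=1}^{N} w_i·q(τ_i)·P_{N−1}(τ_i) = 0, then q has degree at most N − 2; equivalently, the coefficient of P_{N−1} in the Legendre expansion of q vanishes. In particular, a discrete optimal costate sequence of N samples satisfying the condition Σ_{i} w_i λ_i D_{iξ} = 0 is interpolatable by a polynomial of degree at most N − 2. -/

import Mathlib

open Polynomial

/-- Legendre polynomial of degree `n`, via Rodrigues' formula (normalized so `P_n(1) = 1`). -/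
noncomputable def legendreP (n : ℕ) : Polynomial ℝ :=
  Polynomial.C ((2 ^ n * n.factorial : ℝ)⁻¹) * (⇑Polynomial.derivative)^[n] ((X ^ 2 - 1) ^ n)

/-- Lobatto polynomial of degree `N`: `L_N(τ) = (τ² − 1)·P'_{N−1}(τ)`. -/
noncomputable def lobatto (N : ℕ) : Polynomial ℝ :=
  (X ^ 2 - 1) * Polynomial.derivative (legendreP (N - 1))

/-- Lagrange interpolating basis polynomial of index `i` over the nodes `τ`. -/
noncomputable def lagrangeBasis {M : ℕ} (τ : Fin M → ℝ) (i : Fin M) : Polynomial ℝ :=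
  ∏ j ∈ Finset.univ.erase i, (Polynomial.C (τ i - τ j)⁻¹ * (X - Polynomial.C (τ j)))


section Aux


lemma sq_sub_one_eq : (X^2 - 1 : ℝ[X]) = X^2 - C 1 := by rw [C_1]

lemma natDegree_sq_sub_one : (X^2 - 1 : ℝ[X]).natDegree = 2 := by
  rw [sq_sub_one_eq]; exact natDegree_X_pow_sub_C

lemma deriv_sq_sub_one : derivative (X^2 - 1 : ℝ[X]) = C 2 * X := by
  simp [derivative_X_pow]; exact one_add_one_eq_two.trans (map_ofNat C 2).symm

lemma iter2_sq_sub_one : derivative^[2] (X^2 - 1 : ℝ[X]) = C 2 := by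
  simp [Function.iterate_succ_apply, deriv_sq_sub_one]; exact one_add_one_eq_two.trans (map_ofNat C 2).symm

lemma iter_ge3_sq_sub_one {j : ℕ} (hj : 3 ≤ j) : derivative^[j] (X^2 - 1 : ℝ[X]) = 0 :=
  iterate_derivative_eq_zero (by rw [natDegree_sq_sub_one]; omega)

lemma C2_eq : (C 2 : ℝ[X]) = 2 := map_ofNat C 2

lemma base_id (n : ℕ) : (X^2 - 1 : ℝ[X]) * derivative ((X^2-1)^n)
    = (2*(n:ℝ[X])) * (X * (X^2-1)^n) := by
  cases n with
  | zero => simp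
  | succ m =>
    rw [derivative_pow, deriv_sq_sub_one, C2_eq]
    have h1 : ((X^2 - 1 : ℝ[X]))^(m+1) = (X^2-1)^m * (X^2-1) := pow_succ _ _
    have h2 : (C ((m:ℝ)+1) : ℝ[X]) = (m:ℝ[X]) + 1 := by push_cast; simp
    rw [h1]
    push_cast
    rw [h2]
    ring

lemma hcc (m : ℕ) : 2 * (m+2).choose m = (m+2)*(m+1) := by
  have h1 : (m+2).choose m = (m+2).choose 2 := by
    rw [show m = (m+2)-2 by omega]; exact Nat.choose_symm (by omega)
  have h2 : (m+2).choose 2 = (m+2)*(m+1)/2 := by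
    rw [Nat.choose_two_right, show m+2-1 = m+1 from rfl]
  have hdvd : 2 ∣ (m+2)*(m+1) := by
    rw [Nat.mul_comm]; exact (Nat.even_mul_succ_self (m+1)).two_dvd
  have h3 := Nat.div_mul_cancel hdvd
  omega

lemma key_id (n : ℕ) :
    (X^2 - 1 : ℝ[X]) * derivative^[n+2] ((X^2-1)^n)
      + 2 * X * derivative^[n+1] ((X^2-1)^n)
    = (n:ℝ[X]) * ((n:ℝ[X])+1) * derivative^[n] ((X^2-1)^n) := by
  cases n with
  | zero => simp
  | succ m =>
    set u : ℝ[X] := (X^2-1)^(m+1) with hu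
    have EQ := congrArg (fun p => derivative^[m+2] p) (base_id (m+1))
    rw [iterate_derivative_mul] at EQ
    have hpeel : ∀ f : ℕ → ℝ[X], ∑ k ∈ Finset.range (m+2).succ, f k
        = (∑ k ∈ Finset.range m, f k) + f m + f (m+1) + f (m+2) := by
      intro f
      rw [Finset.sum_range_succ, Finset.sum_range_succ, Finset.sum_range_succ]
    rw [hpeel] at EQ
    have hz : ∑ k ∈ Finset.range m, (m+2).choose k •
        (derivative^[m+2-k] (X^2-1 : ℝ[X]) * derivative^[k] (derivative u)) = 0 := by
      apply Finset.sum_eq_zero; intro k hk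
      rw [iter_ge3_sq_sub_one (by simp at hk; omega), zero_mul, smul_zero]
    rw [hz, zero_add] at EQ
    have hconst : (2*((m+1:ℕ):ℝ[X])) = C (2*((m:ℝ)+1)) := by
      rw [map_mul, map_add, map_one, map_natCast, C2_eq]
      push_cast
      ring
    rw [hconst, iterate_derivative_C_mul, iterate_derivative_mul, hpeel] at EQ
    have hz2 : ∑ k ∈ Finset.range m, (m+2).choose k •
        (derivative^[m+2-k] (X : ℝ[X]) * derivative^[k] u) = 0 := by
      apply Finset.sum_eq_zero; intro k hk
      rw [iterate_derivative_eq_zero (by simp at hk ⊢; omega), zero_mul, smul_zero]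
    rw [hz2, zero_add] at EQ
    have e1 : m+2-m = 2 := by omega
    have e2 : m+2-(m+1) = 1 := by omega
    have e3 : m+2-(m+2) = 0 := by omega
    rw [e1, e2, e3] at EQ
    simp only [iter2_sq_sub_one, Function.iterate_one, Function.iterate_zero, id_eq,
      deriv_sq_sub_one, derivative_X,
      Nat.choose_self, Nat.choose_succ_self_right, one_smul] at EQ
    have hiter : ∀ k : ℕ, derivative^[k] (derivative u) = derivative^[k+1] u := by
      intro k; rw [← Function.iterate_succ_apply]
    rw [hiter, hiter, hiter] at EQ
    have hx2 : derivative^[2] (X : ℝ[X]) = 0 :=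
      iterate_derivative_eq_zero (by simp)
    rw [hx2] at EQ
    simp only [nsmul_eq_mul, zero_mul, mul_zero, zero_add] at EQ
    -- clean up constant of the big binomial term
    have hc1 : (((m+2).choose m : ℕ) : ℝ[X]) * (C 2 * derivative^[m+1] u)
        = ((m:ℝ[X])+2) * ((m:ℝ[X])+1) * derivative^[m+1] u := by
      rw [C2_eq]
      calc (((m+2).choose m : ℕ) : ℝ[X]) * (2 * derivative^[m+1] u)
          = ((((2 * (m+2).choose m : ℕ)) : ℝ[X])) * derivative^[m+1] u := by
            push_cast; ring
        _ = (((m+2)*(m+1) : ℕ) : ℝ[X]) * derivative^[m+1] u := by rw [hcc m]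
        _ = _ := by push_cast; ring
    rw [hc1, ← hconst] at EQ
    simp only [C2_eq] at EQ
    simp only [← hu] at EQ
    simp only [show (m+1)+1 = m+2 from rfl, show (m+2)+1 = m+3 from rfl,
      show (m+1)+2 = m+3 from rfl] at EQ ⊢
    push_cast at EQ ⊢
    linear_combination EQ

lemma sq_sub_one_eq' : (X^2 - 1 : ℝ[X]) = X^2 - C 1 := by rw [C_1]

lemma natDegree_sq_sub_one' : (X^2 - 1 : ℝ[X]).natDegree = 2 := by
  rw [sq_sub_one_eq']; exact natDegree_X_pow_sub_C

lemma sq_sub_one_ne : (X^2 - 1 : ℝ[X]) ≠ 0 := by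
  intro h
  have := natDegree_sq_sub_one'
  rw [h] at this; simp at this

lemma monic_upow (n : ℕ) : ((X^2 - 1 : ℝ[X])^n).Monic := by
  apply Monic.pow
  rw [sq_sub_one_eq']; exact monic_X_pow_sub_C _ (by norm_num)

lemma natDegree_upow (n : ℕ) : ((X^2 - 1 : ℝ[X])^n).natDegree = 2*n := by
  rw [natDegree_pow, natDegree_sq_sub_one']; ring

lemma deriv_sq_sub_one' : derivative (X^2 - 1 : ℝ[X]) = 2 * X := by
  have h : derivative (X^2 - 1 : ℝ[X]) = C 2 * X := by simp [derivative_X_pow]; exact one_add_one_eq_two.trans (map_ofNat C 2).symm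
  rw [h, map_ofNat C 2]

lemma legendre_coeff (n : ℕ) :
    (legendreP n).coeff n = ((2*n).descFactorial n : ℝ) * (2 ^ n * n.factorial : ℝ)⁻¹ := by
  rw [legendreP, coeff_C_mul, coeff_iterate_derivative]
  have h1 : ((X^2 - 1 : ℝ[X])^n).coeff (n + n) = 1 := by
    have := (monic_upow n).coeff_natDegree
    rwa [natDegree_upow, two_mul] at this
  rw [h1, ← two_mul, nsmul_eq_mul, mul_one, mul_comm]

lemma legendre_coeff_ne (n : ℕ) : (legendreP n).coeff n ≠ 0 := by
  rw [legendre_coeff]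
  apply mul_ne_zero
  · exact Nat.cast_ne_zero.mpr fun h =>
      absurd (Nat.descFactorial_eq_zero_iff_lt.mp h) (by omega)
  · apply inv_ne_zero; positivity

lemma legendre_natDegree (n : ℕ) : (legendreP n).natDegree = n := by
  apply le_antisymm
  · apply (natDegree_C_mul_le _ _).trans
    exact (natDegree_iterate_derivative _ _).trans (by rw [natDegree_upow]; omega)
  · exact le_natDegree_of_ne_zero (legendre_coeff_ne n)

lemma legendre_deriv_coeff_ne {n : ℕ} (hn : 1 ≤ n) :
    (derivative (legendreP n)).coeff (n-1) ≠ 0 := by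
  rw [coeff_derivative, show n-1+1 = n by omega]
  apply mul_ne_zero (legendre_coeff_ne n)
  positivity

lemma legendre_deriv_ne {n : ℕ} (hn : 1 ≤ n) : derivative (legendreP n) ≠ 0 := fun h => by
  have := legendre_deriv_coeff_ne hn; rw [h] at this; simp at this

lemma legendre_deriv_natDegree {n : ℕ} (hn : 1 ≤ n) :
    (derivative (legendreP n)).natDegree = n - 1 := by
  apply le_antisymm
  · exact (natDegree_derivative_le _).trans (by rw [legendre_natDegree])
  · exact le_natDegree_of_ne_zero (legendre_deriv_coeff_ne hn)

lemma lobatto_ne {N : ℕ} (hN : 2 ≤ N) : lobatto N ≠ 0 := by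
  rw [lobatto]
  exact mul_ne_zero sq_sub_one_ne (legendre_deriv_ne (by omega))

lemma lobatto_natDegree {N : ℕ} (hN : 2 ≤ N) : (lobatto N).natDegree = N := by
  rw [lobatto, natDegree_mul sq_sub_one_ne (legendre_deriv_ne (by omega)),
    natDegree_sq_sub_one', legendre_deriv_natDegree (by omega : 1 ≤ N - 1)]
  omega

lemma legendre_ode (n : ℕ) :
    derivative ((X^2 - 1 : ℝ[X]) * derivative (legendreP n))
      = C ((n:ℝ)*((n:ℝ)+1)) * legendreP n := by
  set u : ℝ[X] := (X^2-1)^n with hu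
  set c : ℝ := ((2:ℝ) ^ n * (n.factorial:ℝ))⁻¹ with hc
  have h1 : derivative^[n+1] u = derivative (derivative^[n] u) :=
    Function.iterate_succ_apply' _ _ _
  have h2 : derivative^[n+2] u = derivative (derivative^[n+1] u) :=
    Function.iterate_succ_apply' _ _ _
  have key := key_id n
  rw [← hu, h2, h1] at key
  have hXc : (C ((n:ℝ)*((n:ℝ)+1)) : ℝ[X]) = (n:ℝ[X]) * ((n:ℝ[X])+1) := by
    rw [map_mul, map_add, map_one, map_natCast]
  have hleg : legendreP n = C c * derivative^[n] u := rfl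
  rw [hleg, hXc, derivative_C_mul]
  rw [show (X^2-1:ℝ[X]) * (C c * derivative (derivative^[n] u))
      = C c * ((X^2-1) * derivative (derivative^[n] u)) by ring]
  rw [derivative_C_mul, derivative_mul, deriv_sq_sub_one']
  calc C c * (2*X * derivative (derivative^[n] u)
        + (X^2-1) * derivative (derivative (derivative^[n] u)))
      = C c * ((X^2-1) * derivative (derivative (derivative^[n] u))
        + 2*X*derivative (derivative^[n] u)) := by ring
    _ = C c * ((n:ℝ[X]) * ((n:ℝ[X])+1) * derivative^[n] u) := by rw [key]
    _ = _ := by ring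


end Aux

/-- if a polynomial `q` of degree at most `N − 1` satisfies the discrete
orthogonality condition `Σ_i w_i·q(τ_i)·P_{N−1}(τ_i) = 0` over the roots of `L_N` with
the Gauss–Lobatto weights, then `q` has degree at most `N − 2`; in particular the
discrete optimal costate sequence is interpolatable by a polynomial of degree `N − 2`. -/
theorem costate_degree {N : ℕ} (hN : 2 ≤ N)
    (τ : Fin N → ℝ) (hτ : Function.Injective τ)
    (hroots : ∀ k, (lobatto N).eval (τ k) = 0)
    (w : Fin N → ℝ)
    (hw : ∀ k, w k = 2 / ((N : ℝ) * ((N : ℝ) - 1) * (legendreP (N - 1)).eval (τ k) ^ 2))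
    (q : Polynomial ℝ) (hq : q.natDegree ≤ N - 1)
    (hsum : ∑ i, w i * q.eval (τ i) * (legendreP (N - 1)).eval (τ i) = 0) :
    q.natDegree ≤ N - 2 := by
  classical
  by_cases hq0 : q = 0
  · simp [hq0]
  set P : ℝ[X] := legendreP (N - 1) with hP
  set L : ℝ[X] := lobatto N with hL
  set l : ℝ := L.leadingCoeff with hl
  have hLne : L ≠ 0 := lobatto_ne hN
  have hlne : l ≠ 0 := leadingCoeff_ne_zero.mpr hLne
  have hcard : (Finset.univ : Finset (Fin N)).card = N := by simp
  have hinj : Set.InjOn τ (Finset.univ : Finset (Fin N)) := Function.Injective.injOn hτ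
  -- L = C l * nodal
  have hnodal : L = C l * Lagrange.nodal Finset.univ τ := by
    have hndeg : (C l * Lagrange.nodal Finset.univ τ).degree = L.degree := by
      rw [degree_mul, degree_C hlne, Lagrange.degree_nodal, hcard,
        degree_eq_natDegree hLne, lobatto_natDegree hN]
      simp
    have hlead : L.leadingCoeff = (C l * Lagrange.nodal Finset.univ τ).leadingCoeff := by
      rw [leadingCoeff_mul, leadingCoeff_C, Lagrange.nodal_monic.leadingCoeff, mul_one]
    have hsub : L - C l * Lagrange.nodal Finset.univ τ = 0 := by
      rcases eq_or_ne (L - C l * Lagrange.nodal Finset.univ τ) 0 with h | h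
      · exact h
      apply Polynomial.eq_zero_of_degree_lt_of_eval_index_eq_zero
          (Finset.univ : Finset (Fin N)) hinj
      · calc (L - C l * Lagrange.nodal Finset.univ τ).degree < L.degree :=
              degree_sub_lt hndeg.symm hLne hlead
          _ ≤ ((Finset.univ : Finset (Fin N)).card : WithBot ℕ) := by
              rw [degree_eq_natDegree hLne, lobatto_natDegree hN, hcard]
      · intro i _
        simp [hroots i, Lagrange.eval_nodal_at_node (Finset.mem_univ i)]
    exact (sub_eq_zero.mp hsub)
  -- node products
  set π : Fin N → ℝ := fun i => ∏ j ∈ Finset.univ.erase i, (τ i - τ j) with hπdef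
  have hπne : ∀ i, π i ≠ 0 := by
    intro i
    apply Finset.prod_ne_zero_iff.mpr
    intro j hj
    exact sub_ne_zero.mpr fun h => (Finset.mem_erase.mp hj).1 (hτ h).symm
  -- derivative of L at nodes
  have hLd : ∀ i, (derivative L).eval (τ i) = l * π i := by
    intro i
    conv_lhs => rw [hnodal]
    rw [derivative_C_mul, eval_mul, eval_C,
      Lagrange.eval_nodal_derivative_eval_node_eq (Finset.mem_univ i), Lagrange.eval_nodal]
  -- the ODE identity
  have hNN : (N : ℝ) * ((N : ℝ) - 1) ≠ 0 := by
    have h2 : (2:ℝ) ≤ (N:ℝ) := by exact_mod_cast hN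
    apply mul_ne_zero <;> nlinarith
  have hode : derivative L = C ((N:ℝ) * ((N:ℝ) - 1)) * P := by
    have h := legendre_ode (N - 1)
    have hcast : ((N-1 : ℕ):ℝ) * (((N-1 : ℕ):ℝ) + 1) = (N:ℝ) * ((N:ℝ) - 1) := by
      have h1 : ((N-1 : ℕ):ℝ) = (N:ℝ) - 1 := by
        push_cast [Nat.cast_sub (by omega : 1 ≤ N)]; ring
      rw [h1]; ring
    rw [hcast] at h
    exact h
  have hPval : ∀ i, (N:ℝ) * ((N:ℝ) - 1) * P.eval (τ i) = l * π i := by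
    intro i
    have := hLd i
    rw [hode, eval_mul, eval_C] at this
    exact this
  have hPne : ∀ i, P.eval (τ i) ≠ 0 := by
    intro i h
    have := hPval i
    rw [h, mul_zero] at this
    exact (mul_ne_zero hlne (hπne i)) this.symm
  -- rewrite the quadrature terms
  have hterm : ∀ i, w i * q.eval (τ i) * P.eval (τ i)
      = 2 / l * (q.eval (τ i) * (π i)⁻¹) := by
    intro i
    have hN0 : (N:ℝ) ≠ 0 := by positivity
    have hN1 : (N:ℝ) - 1 ≠ 0 := by
      have h2 : (2:ℝ) ≤ (N:ℝ) := by exact_mod_cast hN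
      nlinarith
    calc w i * q.eval (τ i) * P.eval (τ i)
        = 2 * q.eval (τ i) / ((N:ℝ) * ((N:ℝ) - 1) * P.eval (τ i)) := by
          rw [hw i]; field_simp [hN0, hN1, hPne i]
      _ = 2 * q.eval (τ i) / (l * π i) := by rw [hPval i]
      _ = 2 / l * (q.eval (τ i) * (π i)⁻¹) := by field_simp [hlne, hπne i]
  have hsig : ∑ i, q.eval (τ i) * (π i)⁻¹ = 0 := by
    have h1 : ∑ i, w i * q.eval (τ i) * P.eval (τ i)
        = 2 / l * ∑ i, q.eval (τ i) * (π i)⁻¹ := by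
      rw [Finset.mul_sum]
      exact Finset.sum_congr rfl fun i _ => hterm i
    rw [h1] at hsum
    rcases mul_eq_zero.mp hsum with h | h
    · exact absurd h (div_ne_zero two_ne_zero hlne)
    · exact h
  -- Lagrange interpolation: coefficient of degree N-1
  have hqi : q = Lagrange.interpolate Finset.univ τ (fun i => q.eval (τ i)) := by
    apply Lagrange.eq_interpolate hinj
    rw [degree_eq_natDegree hq0, hcard]
    exact_mod_cast lt_of_le_of_lt hq (by omega : N - 1 < N)
  have hbcoeff : ∀ i : Fin N, (Lagrange.basis Finset.univ τ i).coeff (N-1) = (π i)⁻¹ := by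
    intro i
    have hnd : (Lagrange.basis Finset.univ τ i).natDegree = N - 1 := by
      rw [Lagrange.natDegree_basis hinj (Finset.mem_univ i), hcard]
    rw [← hnd, coeff_natDegree]
    rw [Lagrange.basis, leadingCoeff_prod]
    rw [hπdef, ← Finset.prod_inv_distrib]
    apply Finset.prod_congr rfl
    intro j _
    rw [Lagrange.basisDivisor, leadingCoeff_mul, leadingCoeff_C,
      (monic_X_sub_C (τ j)).leadingCoeff, mul_one]
  have hcoeff : q.coeff (N-1) = 0 := by
    conv_lhs => rw [hqi]
    rw [Lagrange.interpolate_apply, finset_sum_coeff]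
    exact (Finset.sum_congr rfl fun x _ => by
      rw [coeff_C_mul, hbcoeff x]).trans hsig
  -- conclude
  by_contra hcon
  have hdeg : q.natDegree = N - 1 := by omega
  have : q.leadingCoeff = 0 := by rw [leadingCoeff, hdeg]; exact hcoeff
  exact leadingCoeff_ne_zero.mpr hq0 this
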